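/- Let n ≥ 2 and let v : ZMod 5 → EuclideanSpace ℝ (Fin n) be the vertices of a simple closed polygon with 5 vertices (a piecewise geodesic Jordan curve Γ₅ in ℝⁿ). Then the total curvature of Γ₅, namely Σ_{i=0}^{4} angle(v_{i+1} − v_i, v_{i+2} − v_{i+1}) with indices mod 5, is strictly less than 4π. -/

import Mathlib

open Real InnerProductGeometry

/-- A closed polygon with vertices `v i` (indices cyclic, consecutive vertices distinct)
is simple (a piecewise geodesic Jordan curve) if any two consecutive edges meet exactly
in their common vertex and any two non-consecutive edges are disjoint. -/
def IsSimpleClosedPolygon {k n : ℕ} (v : ZMod k → EuclideanSpace ℝ (Fin n)) : Prop :=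
  (∀ i, v (i + 1) ≠ v i) ∧
  (∀ i, segment ℝ (v i) (v (i + 1)) ∩ segment ℝ (v (i + 1)) (v (i + 2)) = {v (i + 1)}) ∧
  (∀ i j, i ≠ j → i + 1 ≠ j → i ≠ j + 1 →
    Disjoint (segment ℝ (v i) (v (i + 1))) (segment ℝ (v j) (v (j + 1))))

section AuxLemmas

variable {V : Type*} [NormedAddCommGroup V] [InnerProductSpace ℝ V]

local notation "⟪" x ", " y "⟫" => @inner ℝ _ _ x y

private lemma inner_eq_cos_angle {x y : V} (hx : ‖x‖ = 1) (hy : ‖y‖ = 1) :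
    ⟪x, y⟫ = Real.cos (angle x y) := by
  rw [cos_angle, hx, hy]; norm_num

private lemma eq_of_sq_eq_sq' {a b : ℝ} (h : a ^ 2 = b ^ 2) (ha : 0 ≤ a) (hb : 0 ≤ b) :
    a = b := by nlinarith

private lemma norm_sub_cos_smul {x y : V} (hx : ‖x‖ = 1) (hy : ‖y‖ = 1) :
    ‖x - Real.cos (angle x y) • y‖ = Real.sin (angle x y) := by
  have hxy := inner_eq_cos_angle hx hy
  have hsq : ‖x - Real.cos (angle x y) • y‖ ^ 2 = Real.sin (angle x y) ^ 2 := by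
    rw [norm_sub_sq_real, real_inner_smul_right, hxy, norm_smul, hx, hy,
      Real.norm_eq_abs]
    have h1 := Real.sin_sq_add_cos_sq (angle x y)
    have h2 := sq_abs (Real.cos (angle x y))
    nlinarith
  exact eq_of_sq_eq_sq' hsq (norm_nonneg _)
    (Real.sin_nonneg_of_nonneg_of_le_pi (angle_nonneg x y) (angle_le_pi x y))

private lemma cos_angle_add_angle_le {x y z : V} (hx : ‖x‖ = 1) (hy : ‖y‖ = 1)
    (hz : ‖z‖ = 1) : Real.cos (angle x y + angle y z) ≤ ⟪x, z⟫ := by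
  have hxy := inner_eq_cos_angle hx hy
  have hyz := inner_eq_cos_angle hy hz
  have hyx : ⟪y, x⟫ = Real.cos (angle x y) := (real_inner_comm x y).trans hxy
  have hzy : ⟪z, y⟫ = Real.cos (angle y z) := (real_inner_comm y z).trans hyz
  have hyy : ⟪y, y⟫ = 1 := by rw [real_inner_self_eq_norm_sq, hy]; norm_num
  have hns : ‖x - Real.cos (angle x y) • y‖ = Real.sin (angle x y) :=
    norm_sub_cos_smul hx hy
  have hnr : ‖z - Real.cos (angle y z) • y‖ = Real.sin (angle y z) := by
    have := norm_sub_cos_smul hz hy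
    rwa [angle_comm z y] at this
  have hCS := abs_real_inner_le_norm (x - Real.cos (angle x y) • y)
    (z - Real.cos (angle y z) • y)
  rw [hns, hnr] at hCS
  have hexp : ⟪x - Real.cos (angle x y) • y, z - Real.cos (angle y z) • y⟫
      = ⟪x, z⟫ - Real.cos (angle x y) * Real.cos (angle y z) := by
    simp only [inner_sub_left, inner_sub_right, real_inner_smul_left,
      real_inner_smul_right, hxy, hyx, hyz, hzy, hyy]
    ring
  have habs := neg_abs_le (⟪x - Real.cos (angle x y) • y, z - Real.cos (angle y z) • y⟫)
  rw [Real.cos_add]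
  nlinarith [hCS, habs, hexp]

private lemma angle_triangle_unit {x y z : V} (hx : ‖x‖ = 1) (hy : ‖y‖ = 1)
    (hz : ‖z‖ = 1) : angle x z ≤ angle x y + angle y z := by
  rcases le_or_gt π (angle x y + angle y z) with h | h
  · exact (angle_le_pi x z).trans h
  · by_contra hlt
    push_neg at hlt
    have hmem1 : angle x y + angle y z ∈ Set.Icc 0 π :=
      ⟨add_nonneg (angle_nonneg x y) (angle_nonneg y z), h.le⟩
    have hmem2 : angle x z ∈ Set.Icc 0 π := ⟨angle_nonneg x z, angle_le_pi x z⟩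
    have hc := Real.strictAntiOn_cos hmem1 hmem2 hlt
    have h2 := cos_angle_add_angle_le hx hy hz
    rw [← inner_eq_cos_angle hx hz] at hc
    linarith

private lemma collinear_step {x z f2 : V} {α β : ℝ}
    (hx : ‖x‖ = 1) (hz : ‖z‖ = 1) (hf : ‖f2‖ = 1) (hxf : ⟪x, f2⟫ = 0)
    {y : V} (hy : ‖y‖ = 1)
    (hα0 : 0 < α) (hβ0 : 0 < β) (hαβ : α + β ≤ π)
    (hy' : y = Real.cos α • x + Real.sin α • f2)
    (hyz : angle y z = β) (hxz : angle x z = α + β) :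
    z = Real.cos (α + β) • x + Real.sin (α + β) • f2 := by
  have hαπ : α < π := by linarith
  have hsinα : 0 < Real.sin α := Real.sin_pos_of_pos_of_lt_pi hα0 hαπ
  have hxx : ⟪x, x⟫ = 1 := by rw [real_inner_self_eq_norm_sq, hx]; norm_num
  have hff : ⟪f2, f2⟫ = 1 := by rw [real_inner_self_eq_norm_sq, hf]; norm_num
  have hzz : ⟪z, z⟫ = 1 := by rw [real_inner_self_eq_norm_sq, hz]; norm_num
  have hfx : ⟪f2, x⟫ = 0 := (real_inner_comm x f2).trans hxf
  have hinner_yz : ⟪y, z⟫ = Real.cos β := by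
    rw [inner_eq_cos_angle hy hz, hyz]
  have hxz' : ⟪x, z⟫ = Real.cos α * Real.cos β - Real.sin α * Real.sin β := by
    rw [inner_eq_cos_angle hx hz, hxz, Real.cos_add]
  have hyzexp : ⟪y, z⟫ = Real.cos α * ⟪x, z⟫ + Real.sin α * ⟪f2, z⟫ := by
    rw [hy', inner_add_left, real_inner_smul_left, real_inner_smul_left]
  have hfz : ⟪f2, z⟫ = Real.sin α * Real.cos β + Real.cos α * Real.sin β := by
    have h2 : Real.sin α * ⟪f2, z⟫
        = Real.sin α * (Real.sin α * Real.cos β + Real.cos α * Real.sin β) := by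
      linear_combination (-1 : ℝ) * hyzexp + hinner_yz + (-(Real.cos α)) * hxz'
        + (-(Real.cos β)) * (Real.sin_sq_add_cos_sq α)
    exact mul_left_cancel₀ (ne_of_gt hsinα) h2
  have hzx : ⟪z, x⟫ = Real.cos α * Real.cos β - Real.sin α * Real.sin β :=
    (real_inner_comm x z).trans hxz'
  have hzf : ⟪z, f2⟫ = Real.sin α * Real.cos β + Real.cos α * Real.sin β :=
    (real_inner_comm f2 z).trans hfz
  have h0 : ⟪z - (Real.cos (α + β) • x + Real.sin (α + β) • f2),
      z - (Real.cos (α + β) • x + Real.sin (α + β) • f2)⟫ = 0 := by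
    simp only [inner_sub_left, inner_sub_right, inner_add_left, inner_add_right,
      real_inner_smul_left, real_inner_smul_right, Real.cos_add, Real.sin_add,
      hxx, hff, hzz, hxf, hfx, hxz', hfz, hzx, hzf]
    linear_combination (-(Real.sin β ^ 2 + Real.cos β ^ 2)) * Real.sin_sq_add_cos_sq α
      - Real.sin_sq_add_cos_sq β
  have := inner_self_eq_zero.mp h0
  rw [sub_eq_zero] at this
  exact this

private lemma mem_segment_param (A B : V) {θ : ℝ} (h0 : 0 ≤ θ) (h1 : θ ≤ 1) :
    A + θ • (B - A) ∈ segment ℝ A B := by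
  rw [segment_eq_image']; exact ⟨θ, ⟨h0, h1⟩, rfl⟩

/-- Crossing conditions for the segment from `A` with direction coordinates `(xr,yr)`
and the segment from `C` with direction coordinates `(xq,yq)`, where `(xw,yw)` are the
coordinates of `C - A`. -/
private def CrossCond (xr yr xq yq xw yw : ℝ) : Prop :=
  0 < xr * yq - xq * yr ∧ 0 ≤ xw * yq - xq * yw ∧ xw * yq - xq * yw ≤ xr * yq - xq * yr
    ∧ 0 ≤ xw * yr - xr * yw ∧ xw * yr - xr * yw ≤ xr * yq - xq * yr

private lemma segments_not_disjoint (A B C D f1 f2 : V)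
    (Xr Yr Xq Yq Xw Yw : ℝ)
    (hr : B - A = Xr • f1 + Yr • f2) (hq : D - C = Xq • f1 + Yq • f2)
    (hw : C - A = Xw • f1 + Yw • f2)
    (hc : CrossCond Xr Yr Xq Yq Xw Yw) :
    ¬ Disjoint (segment ℝ A B) (segment ℝ C D) := by
  obtain ⟨hΔ, hs0, hs1, ht0, ht1⟩ := hc
  have hΔ0 : (Xr * Yq - Xq * Yr) ≠ 0 := ne_of_gt hΔ
  set s : ℝ := (Xw * Yq - Xq * Yw) / (Xr * Yq - Xq * Yr) with hs_def
  set τ : ℝ := (Xw * Yr - Xr * Yw) / (Xr * Yq - Xq * Yr) with hτ_def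
  have hXYeq : s * Xr - τ * Xq = Xw ∧ s * Yr - τ * Yq = Yw := by
    constructor <;> rw [hs_def, hτ_def] <;>
      rw [div_mul_eq_mul_div, div_mul_eq_mul_div, div_sub_div_same, div_eq_iff hΔ0] <;> ring
  have hpt : A + s • (B - A) = C + τ • (D - C) := by
    have hkey : s • (B - A) - τ • (D - C) = C - A := by
      rw [hr, hq, hw, ← hXYeq.1, ← hXYeq.2]
      module
    have h2 : (A + s • (B - A)) - (C + τ • (D - C))
        = (s • (B - A) - τ • (D - C)) - (C - A) := by abel
    rw [hkey, sub_self] at h2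
    exact sub_eq_zero.mp h2
  rw [Set.not_disjoint_iff]
  refine ⟨A + s • (B - A),
    mem_segment_param A B (div_nonneg hs0 hΔ.le) ((div_le_one hΔ).mpr hs1), ?_⟩
  rw [hpt]
  exact mem_segment_param C D (div_nonneg ht0 hΔ.le) ((div_le_one hΔ).mpr ht1)

private lemma crux {d13 d14 d23 d24 d12 d34 : ℝ} (h14 : 0 < d14)
    (h24 : 0 < d24) (h12 : 0 < d12) (h34 : d34 < 0)
    (hP : d13 * d24 - d14 * d23 = d12 * d34)
    (hA : 0 ≤ d13 + d14) (hB : d23 + d24 ≤ 0) : False := by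
  nlinarith [mul_le_mul_of_nonneg_right (show -d13 ≤ d14 by linarith) h24.le,
    mul_le_mul_of_nonneg_left (show d24 ≤ -d23 by linarith) h14.le,
    mul_pos h12 (neg_pos.2 h34)]

private lemma cross_of (xr yr xq yq x1 y1 : ℝ)
    (hΔ : 0 < xr * yq - xq * yr) (h12 : x1 * yq - xq * y1 ≤ 0)
    (h01 : xr * y1 - x1 * yr ≤ 0)
    (hci : 0 < (xr * y1 - x1 * yr) + (xr * yq - xq * yr))
    (hw : 0 < (xr + x1) * yq - xq * (yr + y1)) :
    CrossCond xr yr xq yq (xr + x1) (yr + y1) := by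
  refine ⟨hΔ, hw.le, ?_, ?_, ?_⟩
  · have hkey : (xr + x1) * yq - xq * (yr + y1) - (xr * yq - xq * yr)
        = x1 * yq - xq * y1 := by ring
    linarith
  · have hkey : (xr + x1) * yr - xr * (yr + y1) = -(xr * y1 - x1 * yr) := by ring
    linarith
  · have hkey : (xr + x1) * yr - xr * (yr + y1) = -(xr * y1 - x1 * yr) := by ring
    linarith

private lemma pentagon_core {X0 Y0 X1 Y1 X2 Y2 X3 Y3 X4 Y4 : ℝ}
    (hD01 : X0*Y1 - X1*Y0 < 0) (hD02 : 0 < X0*Y2 - X2*Y0) (hD03 : X0*Y3 - X3*Y0 < 0)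
    (hD04 : 0 < X0*Y4 - X4*Y0) (hD12 : X1*Y2 - X2*Y1 < 0) (hD13 : 0 < X1*Y3 - X3*Y1)
    (hD14 : X1*Y4 - X4*Y1 < 0) (hD23 : X2*Y3 - X3*Y2 < 0) (hD24 : 0 < X2*Y4 - X4*Y2)
    (hD34 : X3*Y4 - X4*Y3 < 0)
    (hX : X0+X1+X2+X3+X4 = 0) (hY : Y0+Y1+Y2+Y3+Y4 = 0) :
    CrossCond X0 Y0 X2 Y2 (X0+X1) (Y0+Y1) ∨ CrossCond X1 Y1 X3 Y3 (X1+X2) (Y1+Y2) ∨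
    CrossCond X2 Y2 X4 Y4 (X2+X3) (Y2+Y3) ∨ CrossCond X3 Y3 X0 Y0 (X3+X4) (Y3+Y4) ∨
    CrossCond X4 Y4 X1 Y1 (X4+X0) (Y4+Y0) := by
  have hb02 : (X0*Y1 - X1*Y0) + (X0*Y2 - X2*Y0) ≤ 0 →
      (X2*Y3 - X3*Y2) + (X2*Y4 - X4*Y2) ≤ 0 → False := by
    intro h0 h2
    have hA : 0 ≤ (X0*Y3 - X3*Y0) + (X0*Y4 - X4*Y0) := by
      have hiden : ((X0*Y1 - X1*Y0) + (X0*Y2 - X2*Y0))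
          + ((X0*Y3 - X3*Y0) + (X0*Y4 - X4*Y0)) = 0 := by
        linear_combination X0 * hY - Y0 * hX
      linarith
    exact crux hD04 hD24 hD02 hD34 (by ring) hA h2
  have hb13 : (X1*Y2 - X2*Y1) + (X1*Y3 - X3*Y1) ≤ 0 →
      (X3*Y4 - X4*Y3) + (X3*Y0 - X0*Y3) ≤ 0 → False := by
    intro h1 h3
    have hA : 0 ≤ (X1*Y4 - X4*Y1) + (X1*Y0 - X0*Y1) := by
      have hiden : ((X1*Y2 - X2*Y1) + (X1*Y3 - X3*Y1))
          + ((X1*Y4 - X4*Y1) + (X1*Y0 - X0*Y1)) = 0 := by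
        linear_combination X1 * hY - Y1 * hX
      linarith
    exact crux (show 0 < X1*Y0 - X0*Y1 by linarith) (show 0 < X3*Y0 - X0*Y3 by linarith)
      hD13 (show X4*Y0 - X0*Y4 < 0 by linarith) (by ring) hA h3
  have hb24 : (X2*Y3 - X3*Y2) + (X2*Y4 - X4*Y2) ≤ 0 →
      (X4*Y0 - X0*Y4) + (X4*Y1 - X1*Y4) ≤ 0 → False := by
    intro h2 h4
    have hA : 0 ≤ (X2*Y0 - X0*Y2) + (X2*Y1 - X1*Y2) := by
      have hiden : ((X2*Y3 - X3*Y2) + (X2*Y4 - X4*Y2))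
          + ((X2*Y0 - X0*Y2) + (X2*Y1 - X1*Y2)) = 0 := by
        linear_combination X2 * hY - Y2 * hX
      linarith
    exact crux (show 0 < X2*Y1 - X1*Y2 by linarith) (show 0 < X4*Y1 - X1*Y4 by linarith)
      hD24 (show X0*Y1 - X1*Y0 < 0 by linarith) (by ring) hA h4
  have hb30 : (X3*Y4 - X4*Y3) + (X3*Y0 - X0*Y3) ≤ 0 →
      (X0*Y1 - X1*Y0) + (X0*Y2 - X2*Y0) ≤ 0 → False := by
    intro h3 h0
    have hA : 0 ≤ (X3*Y1 - X1*Y3) + (X3*Y2 - X2*Y3) := by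
      have hiden : ((X3*Y4 - X4*Y3) + (X3*Y0 - X0*Y3))
          + ((X3*Y1 - X1*Y3) + (X3*Y2 - X2*Y3)) = 0 := by
        linear_combination X3 * hY - Y3 * hX
      linarith
    exact crux (show 0 < X3*Y2 - X2*Y3 by linarith) hD02
      (show 0 < X3*Y0 - X0*Y3 by linarith) hD12 (by ring) hA h0
  have hb41 : (X4*Y0 - X0*Y4) + (X4*Y1 - X1*Y4) ≤ 0 →
      (X1*Y2 - X2*Y1) + (X1*Y3 - X3*Y1) ≤ 0 → False := by
    intro h4 h1
    have hA : 0 ≤ (X4*Y2 - X2*Y4) + (X4*Y3 - X3*Y4) := by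
      have hiden : ((X4*Y0 - X0*Y4) + (X4*Y1 - X1*Y4))
          + ((X4*Y2 - X2*Y4) + (X4*Y3 - X3*Y4)) = 0 := by
        linear_combination X4 * hY - Y4 * hX
      linarith
    exact crux (show 0 < X4*Y3 - X3*Y4 by linarith) hD13
      (show 0 < X4*Y1 - X1*Y4 by linarith) hD23 (by ring) hA h1
  have him0 : 0 < (X0*Y1 - X1*Y0) + (X0*Y2 - X2*Y0) →
      0 < (X2*Y3 - X3*Y2) + (X2*Y4 - X4*Y2) →
      CrossCond X0 Y0 X2 Y2 (X0+X1) (Y0+Y1) := by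
    intro h0 h2
    refine cross_of X0 Y0 X2 Y2 X1 Y1 hD02 hD12.le hD01.le h0 ?_
    have hkey : (X0 + X1) * Y2 - X2 * (Y0 + Y1)
        - ((X2*Y3 - X3*Y2) + (X2*Y4 - X4*Y2)) = 0 := by
      linear_combination Y2 * hX - X2 * hY
    linarith
  have him1 : 0 < (X1*Y2 - X2*Y1) + (X1*Y3 - X3*Y1) →
      0 < (X3*Y4 - X4*Y3) + (X3*Y0 - X0*Y3) →
      CrossCond X1 Y1 X3 Y3 (X1+X2) (Y1+Y2) := by
    intro h1 h3
    refine cross_of X1 Y1 X3 Y3 X2 Y2 hD13 hD23.le hD12.le h1 ?_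
    have hkey : (X1 + X2) * Y3 - X3 * (Y1 + Y2)
        - ((X3*Y4 - X4*Y3) + (X3*Y0 - X0*Y3)) = 0 := by
      linear_combination Y3 * hX - X3 * hY
    linarith
  have him2 : 0 < (X2*Y3 - X3*Y2) + (X2*Y4 - X4*Y2) →
      0 < (X4*Y0 - X0*Y4) + (X4*Y1 - X1*Y4) →
      CrossCond X2 Y2 X4 Y4 (X2+X3) (Y2+Y3) := by
    intro h2 h4
    refine cross_of X2 Y2 X4 Y4 X3 Y3 hD24 hD34.le hD23.le h2 ?_
    have hkey : (X2 + X3) * Y4 - X4 * (Y2 + Y3)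
        - ((X4*Y0 - X0*Y4) + (X4*Y1 - X1*Y4)) = 0 := by
      linear_combination Y4 * hX - X4 * hY
    linarith
  have him3 : 0 < (X3*Y4 - X4*Y3) + (X3*Y0 - X0*Y3) →
      0 < (X0*Y1 - X1*Y0) + (X0*Y2 - X2*Y0) →
      CrossCond X3 Y3 X0 Y0 (X3+X4) (Y3+Y4) := by
    intro h3 h0
    refine cross_of X3 Y3 X0 Y0 X4 Y4 (by linarith) (by linarith) hD34.le h3 ?_
    have hkey : (X3 + X4) * Y0 - X0 * (Y3 + Y4)
        - ((X0*Y1 - X1*Y0) + (X0*Y2 - X2*Y0)) = 0 := by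
      linear_combination Y0 * hX - X0 * hY
    linarith
  have him4 : 0 < (X4*Y0 - X0*Y4) + (X4*Y1 - X1*Y4) →
      0 < (X1*Y2 - X2*Y1) + (X1*Y3 - X3*Y1) →
      CrossCond X4 Y4 X1 Y1 (X4+X0) (Y4+Y0) := by
    intro h4 h1
    refine cross_of X4 Y4 X1 Y1 X0 Y0 (by linarith) hD01.le (by linarith) h4 ?_
    have hkey : (X4 + X0) * Y1 - X1 * (Y4 + Y0)
        - ((X1*Y2 - X2*Y1) + (X1*Y3 - X3*Y1)) = 0 := by
      linear_combination Y1 * hX - X1 * hY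
    linarith
  rcases lt_or_ge 0 ((X0*Y1 - X1*Y0) + (X0*Y2 - X2*Y0)) with h0 | h0 <;>
    rcases lt_or_ge 0 ((X1*Y2 - X2*Y1) + (X1*Y3 - X3*Y1)) with h1 | h1 <;>
    rcases lt_or_ge 0 ((X2*Y3 - X3*Y2) + (X2*Y4 - X4*Y2)) with h2 | h2 <;>
    rcases lt_or_ge 0 ((X3*Y4 - X4*Y3) + (X3*Y0 - X0*Y3)) with h3 | h3 <;>
    rcases lt_or_ge 0 ((X4*Y0 - X0*Y4) + (X4*Y1 - X1*Y4)) with h4 | h4 <;>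
    first
      | exact Or.inl (him0 h0 h2)
      | exact Or.inr (Or.inl (him1 h1 h3))
      | exact Or.inr (Or.inr (Or.inl (him2 h2 h4)))
      | exact Or.inr (Or.inr (Or.inr (Or.inl (him3 h3 h0))))
      | exact Or.inr (Or.inr (Or.inr (Or.inr (him4 h4 h1))))
      | exact (hb02 h0 h2).elim
      | exact (hb13 h1 h3).elim
      | exact (hb24 h2 h4).elim
      | exact (hb30 h3 h0).elim
      | exact (hb41 h4 h1).elim

end AuxLemmas

set_option maxHeartbeats 1000000

/-- The total curvature of a piecewise geodesic Jordan curve with 5 vertices in `ℝⁿ`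
is strictly less than `4π`. -/
theorem total_curvature_gamma5_lt_four_pi (n : ℕ) (hn : 2 ≤ n)
    (v : ZMod 5 → EuclideanSpace ℝ (Fin n))
    (hsimple : IsSimpleClosedPolygon v) :
    ∑ i : ZMod 5, angle (v (i + 1) - v i) (v (i + 2) - v (i + 1)) < 4 * π := by
  obtain ⟨hne, hcons, hdisj⟩ := hsimple
  -- edge vectors
  obtain ⟨E, hE⟩ : ∃ E : ZMod 5 → EuclideanSpace ℝ (Fin n),
      ∀ i, E i = v (i + 1) - v i := ⟨_, fun _ => rfl⟩
  have hE1 : ∀ i : ZMod 5, E (i + 1) = v (i + 2) - v (i + 1) := by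
    intro i
    rw [hE (i + 1), show i + 1 + 1 = i + 2 by ring]
  have hEne : ∀ i : ZMod 5, E i ≠ 0 := fun i => by
    rw [hE]; exact sub_ne_zero.mpr (hne i)
  obtain ⟨a, ha⟩ : ∃ a : ZMod 5 → ℝ, ∀ i, a i = angle (E i) (E (i + 1)) :=
    ⟨_, fun _ => rfl⟩
  -- rewrite the goal
  have hsum : (∑ i : ZMod 5, angle (v (i + 1) - v i) (v (i + 2) - v (i + 1)))
      = a 0 + a 1 + a 2 + a 3 + a 4 := by
    have hgoal : ∀ i : ZMod 5,
        angle (v (i + 1) - v i) (v (i + 2) - v (i + 1)) = a i := by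
      intro i
      rw [ha i, hE i, hE1 i]
    simp only [hgoal]
    exact Fin.sum_univ_five a
  rw [hsum]
  by_contra hcon
  push_neg at hcon
  -- each angle is < π
  have hapi : ∀ i : ZMod 5, a i < π := by
    intro i
    rcases lt_or_eq_of_le (angle_le_pi (E i) (E (i + 1))) with h | h
    · rw [ha i]; exact h
    · exfalso
      rw [angle_eq_pi_iff] at h
      obtain ⟨hi0, r, hr, hEr⟩ := h
      have hrpos : 0 < -r := neg_pos.2 hr
      have hcmin : 0 < min 1 (-r) := lt_min one_pos hrpos
      have hc0 : 0 < min 1 (-r) / 2 := by linarith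
      have hc1 : min 1 (-r) / 2 ≤ 1 := by
        have := min_le_left 1 (-r); linarith
      have hcr : min 1 (-r) / 2 ≤ -r := by
        have := min_le_right 1 (-r); linarith
      have hmem1 : v (i + 1) - (min 1 (-r) / 2) • E i ∈ segment ℝ (v i) (v (i + 1)) := by
        have heq : v (i + 1) - (min 1 (-r) / 2) • E i
            = v i + (1 - min 1 (-r) / 2) • (v (i + 1) - v i) := by
          rw [hE i]; module
        rw [heq]
        exact mem_segment_param _ _ (by linarith) (by linarith)
      have hmem2 : v (i + 1) - (min 1 (-r) / 2) • E i
          ∈ segment ℝ (v (i + 1)) (v (i + 2)) := by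
        have heq : v (i + 1) - (min 1 (-r) / 2) • E i
            = v (i + 1) + (min 1 (-r) / 2 / (-r)) • (v (i + 2) - v (i + 1)) := by
          rw [← hE1 i, hEr, smul_smul,
            show min 1 (-r) / 2 / (-r) * r = -(min 1 (-r) / 2) from by
              rw [div_mul_eq_mul_div, div_neg, mul_div_assoc,
                div_self (ne_of_lt hr), mul_one]]
          module
        rw [heq]
        exact mem_segment_param _ _ (div_nonneg hc0.le hrpos.le)
          ((div_le_one hrpos).mpr hcr)
      have hq : v (i + 1) - (min 1 (-r) / 2) • E i = v (i + 1) := by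
        have hmem : v (i + 1) - (min 1 (-r) / 2) • E i
            ∈ segment ℝ (v i) (v (i + 1)) ∩ segment ℝ (v (i + 1)) (v (i + 2)) :=
          ⟨hmem1, hmem2⟩
        rw [hcons i] at hmem
        exact hmem
      exact smul_ne_zero (ne_of_gt hc0) (hEne i) (sub_eq_self.mp hq)
  have ha0 := hapi 0; have ha1 := hapi 1; have ha2 := hapi 2
  have ha3 := hapi 3; have ha4 := hapi 4
  have han0 := (ha 0) ▸ angle_nonneg (E 0) (E (0+1))
  have han1 := (ha 1) ▸ angle_nonneg (E 1) (E (1+1))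
  have han2 := (ha 2) ▸ angle_nonneg (E 2) (E (2+1))
  have han3 := (ha 3) ▸ angle_nonneg (E 3) (E (3+1))
  have han4 := (ha 4) ▸ angle_nonneg (E 4) (E (4+1))
  -- unit direction vectors
  obtain ⟨U, hU⟩ : ∃ U : ZMod 5 → EuclideanSpace ℝ (Fin n),
      ∀ i, U i = ‖E i‖⁻¹ • E i := ⟨_, fun _ => rfl⟩
  have hUnorm : ∀ i, ‖U i‖ = 1 := fun i => by
    rw [hU]; exact norm_smul_inv_norm (hEne i)
  have hUne : ∀ i, U i ≠ 0 := fun i => by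
    intro h; have h2 := hUnorm i; rw [h, norm_zero] at h2; norm_num at h2
  have hUangle : ∀ i j : ZMod 5, angle (U i) (U j) = angle (E i) (E j) := by
    intro i j
    rw [hU i, hU j,
      angle_smul_left_of_pos _ _ (inv_pos.2 (norm_pos_iff.2 (hEne i))),
      angle_smul_right_of_pos _ _ (inv_pos.2 (norm_pos_iff.2 (hEne j)))]
  -- angles along the alternating chain
  have hw01 : angle (U 0) (-U 1) = π - a 0 := by
    rw [angle_neg_right, hUangle, ha 0, show (0:ZMod 5) + 1 = 1 from by decide]
  have hw12 : angle (-U 1) (U 2) = π - a 1 := by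
    rw [angle_neg_left, hUangle, ha 1, show (1:ZMod 5) + 1 = 2 from by decide]
  have hw23 : angle (U 2) (-U 3) = π - a 2 := by
    rw [angle_neg_right, hUangle, ha 2, show (2:ZMod 5) + 1 = 3 from by decide]
  have hw34 : angle (-U 3) (U 4) = π - a 3 := by
    rw [angle_neg_left, hUangle, ha 3, show (3:ZMod 5) + 1 = 4 from by decide]
  have hw40 : angle (U 4) (-U 0) = π - a 4 := by
    rw [angle_neg_right, hUangle, ha 4, show (4:ZMod 5) + 1 = 0 from by decide]
  have hUn1 : ‖-U 1‖ = 1 := by rw [norm_neg]; exact hUnorm 1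
  have hUn3 : ‖-U 3‖ = 1 := by rw [norm_neg]; exact hUnorm 3
  have hUn0 : ‖-U 0‖ = 1 := by rw [norm_neg]; exact hUnorm 0
  -- the triangle inequality chain, and the forced equalities
  have T2 : angle (U 0) (U 2) ≤ (π - a 0) + (π - a 1) := by
    have h := angle_triangle_unit (hUnorm 0) hUn1 (hUnorm 2)
    rwa [hw01, hw12] at h
  have T3 : angle (U 0) (-U 3) ≤ angle (U 0) (U 2) + (π - a 2) := by
    have h := angle_triangle_unit (hUnorm 0) (hUnorm 2) hUn3
    rwa [hw23] at h
  have T4 : angle (U 0) (U 4) ≤ angle (U 0) (-U 3) + (π - a 3) := by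
    have h := angle_triangle_unit (hUnorm 0) hUn3 (hUnorm 4)
    rwa [hw34] at h
  have T5 : π ≤ angle (U 0) (U 4) + (π - a 4) := by
    have h := angle_triangle_unit (hUnorm 0) (hUnorm 4) hUn0
    rwa [hw40, angle_self_neg_of_nonzero (hUne 0)] at h
  have hd2 : angle (U 0) (U 2) = (π - a 0) + (π - a 1) :=
    le_antisymm T2 (by linarith)
  have hd3 : angle (U 0) (-U 3) = (π - a 0) + (π - a 1) + (π - a 2) :=
    le_antisymm (by linarith) (by linarith)
  have hd4 : angle (U 0) (U 4) = (π - a 0) + (π - a 1) + (π - a 2) + (π - a 3) :=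
    le_antisymm (by linarith) (by linarith)
  have hStot : (π - a 0) + (π - a 1) + (π - a 2) + (π - a 3) + (π - a 4) = π := by
    linarith
  -- construct the orthonormal frame of the plane
  have hb0pos : 0 < π - a 0 := by linarith
  have hb1pos : 0 < π - a 1 := by linarith
  have hb2pos : 0 < π - a 2 := by linarith
  have hb3pos : 0 < π - a 3 := by linarith
  have hb4pos : 0 < π - a 4 := by linarith
  have hsin0 : 0 < Real.sin (π - a 0) :=
    Real.sin_pos_of_pos_of_lt_pi hb0pos (by linarith)
  have hcos01 : @inner ℝ _ _ (U 0) (-U 1) = Real.cos (π - a 0) := by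
    rw [inner_eq_cos_angle (hUnorm 0) hUn1, hw01]
  have hnsub : ‖-U 1 - Real.cos (π - a 0) • U 0‖ = Real.sin (π - a 0) := by
    have h := norm_sub_cos_smul hUn1 (hUnorm 0)
    rwa [angle_comm (-U 1) (U 0), hw01] at h
  obtain ⟨f2, hf2⟩ : ∃ f2 : EuclideanSpace ℝ (Fin n),
      f2 = (Real.sin (π - a 0))⁻¹ • (-U 1 - Real.cos (π - a 0) • U 0) := ⟨_, rfl⟩
  have hf2norm : ‖f2‖ = 1 := by
    rw [hf2, norm_smul, Real.norm_eq_abs, abs_inv, abs_of_pos hsin0, hnsub,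
      inv_mul_cancel₀ (ne_of_gt hsin0)]
  have hU0f2 : @inner ℝ _ _ (U 0) f2 = 0 := by
    rw [hf2, real_inner_smul_right, inner_sub_right, real_inner_smul_right, hcos01,
      real_inner_self_eq_norm_sq, hUnorm 0]
    ring
  have hw1eq : -U 1 = Real.cos (π - a 0) • U 0 + Real.sin (π - a 0) • f2 := by
    rw [hf2, smul_smul, mul_inv_cancel₀ (ne_of_gt hsin0), one_smul]
    module
  -- all directions lie in the plane spanned by U 0, f2
  have hstep2 : U 2 = Real.cos ((π - a 0) + (π - a 1)) • U 0
      + Real.sin ((π - a 0) + (π - a 1)) • f2 :=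
    collinear_step (hUnorm 0) (hUnorm 2) hf2norm hU0f2 hUn1 hb0pos hb1pos
      (by linarith) hw1eq hw12 hd2
  have hstep3 : -U 3 = Real.cos ((π - a 0) + (π - a 1) + (π - a 2)) • U 0
      + Real.sin ((π - a 0) + (π - a 1) + (π - a 2)) • f2 :=
    collinear_step (hUnorm 0) hUn3 hf2norm hU0f2 (hUnorm 2) (by linarith) hb2pos
      (by linarith) hstep2 hw23 hd3
  have hstep4 : U 4 = Real.cos ((π - a 0) + (π - a 1) + (π - a 2) + (π - a 3)) • U 0
      + Real.sin ((π - a 0) + (π - a 1) + (π - a 2) + (π - a 3)) • f2 :=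
    collinear_step (hUnorm 0) (hUnorm 4) hf2norm hU0f2 hUn3 (by linarith) hb3pos
      (by linarith) hstep3 hw34 hd4
  -- coordinates of the edges in the plane
  have hn0 : (0:ℝ) < ‖E 0‖ := norm_pos_iff.2 (hEne 0)
  have hn1 : (0:ℝ) < ‖E 1‖ := norm_pos_iff.2 (hEne 1)
  have hn2 : (0:ℝ) < ‖E 2‖ := norm_pos_iff.2 (hEne 2)
  have hn3 : (0:ℝ) < ‖E 3‖ := norm_pos_iff.2 (hEne 3)
  have hn4 : (0:ℝ) < ‖E 4‖ := norm_pos_iff.2 (hEne 4)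
  have hEU : ∀ i, E i = ‖E i‖ • U i := fun i => by
    rw [hU i, smul_inv_smul₀ (ne_of_gt (norm_pos_iff.2 (hEne i)))]
  have hE0c : E 0 = (‖E 0‖) • U 0 + (0:ℝ) • f2 := by
    rw [zero_smul, add_zero]; exact hEU 0
  have hE1c : E 1 = (-(‖E 1‖ * Real.cos (π - a 0))) • U 0
      + (-(‖E 1‖ * Real.sin (π - a 0))) • f2 := by
    have hU1 : U 1 = -(Real.cos (π - a 0) • U 0 + Real.sin (π - a 0) • f2) := by
      rw [← hw1eq, neg_neg]
    conv_lhs => rw [hEU 1, hU1]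
    module
  have hE2c : E 2 = (‖E 2‖ * Real.cos ((π - a 0) + (π - a 1))) • U 0
      + (‖E 2‖ * Real.sin ((π - a 0) + (π - a 1))) • f2 := by
    conv_lhs => rw [hEU 2, hstep2]
    module
  have hE3c : E 3 = (-(‖E 3‖ * Real.cos ((π - a 0) + (π - a 1) + (π - a 2)))) • U 0
      + (-(‖E 3‖ * Real.sin ((π - a 0) + (π - a 1) + (π - a 2)))) • f2 := by
    have hU3 : U 3 = -(Real.cos ((π - a 0) + (π - a 1) + (π - a 2)) • U 0
        + Real.sin ((π - a 0) + (π - a 1) + (π - a 2)) • f2) := by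
      rw [← hstep3, neg_neg]
    conv_lhs => rw [hEU 3, hU3]
    module
  have hE4c : E 4 = (‖E 4‖ * Real.cos ((π - a 0) + (π - a 1) + (π - a 2) + (π - a 3))) • U 0
      + (‖E 4‖ * Real.sin ((π - a 0) + (π - a 1) + (π - a 2) + (π - a 3))) • f2 := by
    conv_lhs => rw [hEU 4, hstep4]
    module
  -- sine positivity
  have hsinT2 : 0 < Real.sin ((π - a 0) + (π - a 1)) :=
    Real.sin_pos_of_pos_of_lt_pi (by linarith) (by linarith)
  have hsinT3 : 0 < Real.sin ((π - a 0) + (π - a 1) + (π - a 2)) :=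
    Real.sin_pos_of_pos_of_lt_pi (by linarith) (by linarith)
  have hsinT4 : 0 < Real.sin ((π - a 0) + (π - a 1) + (π - a 2) + (π - a 3)) :=
    Real.sin_pos_of_pos_of_lt_pi (by linarith) (by linarith)
  have hsb1 : 0 < Real.sin (π - a 1) :=
    Real.sin_pos_of_pos_of_lt_pi hb1pos (by linarith)
  have hsb2 : 0 < Real.sin (π - a 2) :=
    Real.sin_pos_of_pos_of_lt_pi hb2pos (by linarith)
  have hsb3 : 0 < Real.sin (π - a 3) :=
    Real.sin_pos_of_pos_of_lt_pi hb3pos (by linarith)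
  have hsb12 : 0 < Real.sin ((π - a 1) + (π - a 2)) :=
    Real.sin_pos_of_pos_of_lt_pi (by linarith) (by linarith)
  have hsb23 : 0 < Real.sin ((π - a 2) + (π - a 3)) :=
    Real.sin_pos_of_pos_of_lt_pi (by linarith) (by linarith)
  have hsb123 : 0 < Real.sin ((π - a 1) + (π - a 2) + (π - a 3)) :=
    Real.sin_pos_of_pos_of_lt_pi (by linarith) (by linarith)
  -- difference identities
  have hdif12 : Real.sin ((π - a 0) + (π - a 1)) * Real.cos (π - a 0)
      - Real.cos ((π - a 0) + (π - a 1)) * Real.sin (π - a 0) = Real.sin (π - a 1) := by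
    rw [← Real.sin_sub]; congr 1; ring
  have hdif13 : Real.sin ((π - a 0) + (π - a 1) + (π - a 2)) * Real.cos (π - a 0)
      - Real.cos ((π - a 0) + (π - a 1) + (π - a 2)) * Real.sin (π - a 0)
      = Real.sin ((π - a 1) + (π - a 2)) := by
    rw [← Real.sin_sub]; congr 1; ring
  have hdif14 : Real.sin ((π - a 0) + (π - a 1) + (π - a 2) + (π - a 3)) * Real.cos (π - a 0)
      - Real.cos ((π - a 0) + (π - a 1) + (π - a 2) + (π - a 3)) * Real.sin (π - a 0)
      = Real.sin ((π - a 1) + (π - a 2) + (π - a 3)) := by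
    rw [← Real.sin_sub]; congr 1; ring
  have hdif23 : Real.sin ((π - a 0) + (π - a 1) + (π - a 2))
        * Real.cos ((π - a 0) + (π - a 1))
      - Real.cos ((π - a 0) + (π - a 1) + (π - a 2))
        * Real.sin ((π - a 0) + (π - a 1)) = Real.sin (π - a 2) := by
    rw [← Real.sin_sub]; congr 1; ring
  have hdif24 : Real.sin ((π - a 0) + (π - a 1) + (π - a 2) + (π - a 3))
        * Real.cos ((π - a 0) + (π - a 1))
      - Real.cos ((π - a 0) + (π - a 1) + (π - a 2) + (π - a 3))
        * Real.sin ((π - a 0) + (π - a 1)) = Real.sin ((π - a 2) + (π - a 3)) := by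
    rw [← Real.sin_sub]; congr 1; ring
  have hdif34 : Real.sin ((π - a 0) + (π - a 1) + (π - a 2) + (π - a 3))
        * Real.cos ((π - a 0) + (π - a 1) + (π - a 2))
      - Real.cos ((π - a 0) + (π - a 1) + (π - a 2) + (π - a 3))
        * Real.sin ((π - a 0) + (π - a 1) + (π - a 2)) = Real.sin (π - a 3) := by
    rw [← Real.sin_sub]; congr 1; ring
  -- the ten cross-product sign facts
  have hD01 : (‖E 0‖) * (-(‖E 1‖ * Real.sin (π - a 0)))
      - (-(‖E 1‖ * Real.cos (π - a 0))) * 0 < 0 := by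
    linarith [mul_pos hn0 (mul_pos hn1 hsin0)]
  have hD02 : 0 < (‖E 0‖) * (‖E 2‖ * Real.sin ((π - a 0) + (π - a 1)))
      - (‖E 2‖ * Real.cos ((π - a 0) + (π - a 1))) * 0 := by
    linarith [mul_pos hn0 (mul_pos hn2 hsinT2)]
  have hD03 : (‖E 0‖) * (-(‖E 3‖ * Real.sin ((π - a 0) + (π - a 1) + (π - a 2))))
      - (-(‖E 3‖ * Real.cos ((π - a 0) + (π - a 1) + (π - a 2)))) * 0 < 0 := by
    linarith [mul_pos hn0 (mul_pos hn3 hsinT3)]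
  have hD04 : 0 < (‖E 0‖) * (‖E 4‖ * Real.sin ((π - a 0) + (π - a 1) + (π - a 2) + (π - a 3)))
      - (‖E 4‖ * Real.cos ((π - a 0) + (π - a 1) + (π - a 2) + (π - a 3))) * 0 := by
    linarith [mul_pos hn0 (mul_pos hn4 hsinT4)]
  have hD12 : (-(‖E 1‖ * Real.cos (π - a 0))) * (‖E 2‖ * Real.sin ((π - a 0) + (π - a 1)))
      - (‖E 2‖ * Real.cos ((π - a 0) + (π - a 1))) * (-(‖E 1‖ * Real.sin (π - a 0))) < 0 := by
    have heq : (-(‖E 1‖ * Real.cos (π - a 0))) * (‖E 2‖ * Real.sin ((π - a 0) + (π - a 1)))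
        - (‖E 2‖ * Real.cos ((π - a 0) + (π - a 1))) * (-(‖E 1‖ * Real.sin (π - a 0)))
        = -(‖E 1‖ * ‖E 2‖ * Real.sin (π - a 1)) := by
      linear_combination (-(‖E 1‖ * ‖E 2‖)) * hdif12
    rw [heq]
    exact neg_lt_zero.mpr (mul_pos (mul_pos hn1 hn2) hsb1)
  have hD13 : 0 < (-(‖E 1‖ * Real.cos (π - a 0)))
        * (-(‖E 3‖ * Real.sin ((π - a 0) + (π - a 1) + (π - a 2))))
      - (-(‖E 3‖ * Real.cos ((π - a 0) + (π - a 1) + (π - a 2))))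
        * (-(‖E 1‖ * Real.sin (π - a 0))) := by
    have heq : (-(‖E 1‖ * Real.cos (π - a 0)))
        * (-(‖E 3‖ * Real.sin ((π - a 0) + (π - a 1) + (π - a 2))))
        - (-(‖E 3‖ * Real.cos ((π - a 0) + (π - a 1) + (π - a 2))))
        * (-(‖E 1‖ * Real.sin (π - a 0)))
        = ‖E 1‖ * ‖E 3‖ * Real.sin ((π - a 1) + (π - a 2)) := by
      linear_combination (‖E 1‖ * ‖E 3‖) * hdif13
    rw [heq]
    exact mul_pos (mul_pos hn1 hn3) hsb12
  have hD14 : (-(‖E 1‖ * Real.cos (π - a 0)))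
        * (‖E 4‖ * Real.sin ((π - a 0) + (π - a 1) + (π - a 2) + (π - a 3)))
      - (‖E 4‖ * Real.cos ((π - a 0) + (π - a 1) + (π - a 2) + (π - a 3)))
        * (-(‖E 1‖ * Real.sin (π - a 0))) < 0 := by
    have heq : (-(‖E 1‖ * Real.cos (π - a 0)))
        * (‖E 4‖ * Real.sin ((π - a 0) + (π - a 1) + (π - a 2) + (π - a 3)))
        - (‖E 4‖ * Real.cos ((π - a 0) + (π - a 1) + (π - a 2) + (π - a 3)))
        * (-(‖E 1‖ * Real.sin (π - a 0)))
        = -(‖E 1‖ * ‖E 4‖ * Real.sin ((π - a 1) + (π - a 2) + (π - a 3))) := by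
      linear_combination (-(‖E 1‖ * ‖E 4‖)) * hdif14
    rw [heq]
    exact neg_lt_zero.mpr (mul_pos (mul_pos hn1 hn4) hsb123)
  have hD23 : (‖E 2‖ * Real.cos ((π - a 0) + (π - a 1)))
        * (-(‖E 3‖ * Real.sin ((π - a 0) + (π - a 1) + (π - a 2))))
      - (-(‖E 3‖ * Real.cos ((π - a 0) + (π - a 1) + (π - a 2))))
        * (‖E 2‖ * Real.sin ((π - a 0) + (π - a 1))) < 0 := by
    have heq : (‖E 2‖ * Real.cos ((π - a 0) + (π - a 1)))
        * (-(‖E 3‖ * Real.sin ((π - a 0) + (π - a 1) + (π - a 2))))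
        - (-(‖E 3‖ * Real.cos ((π - a 0) + (π - a 1) + (π - a 2))))
        * (‖E 2‖ * Real.sin ((π - a 0) + (π - a 1)))
        = -(‖E 2‖ * ‖E 3‖ * Real.sin (π - a 2)) := by
      linear_combination (-(‖E 2‖ * ‖E 3‖)) * hdif23
    rw [heq]
    exact neg_lt_zero.mpr (mul_pos (mul_pos hn2 hn3) hsb2)
  have hD24 : 0 < (‖E 2‖ * Real.cos ((π - a 0) + (π - a 1)))
        * (‖E 4‖ * Real.sin ((π - a 0) + (π - a 1) + (π - a 2) + (π - a 3)))
      - (‖E 4‖ * Real.cos ((π - a 0) + (π - a 1) + (π - a 2) + (π - a 3)))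
        * (‖E 2‖ * Real.sin ((π - a 0) + (π - a 1))) := by
    have heq : (‖E 2‖ * Real.cos ((π - a 0) + (π - a 1)))
        * (‖E 4‖ * Real.sin ((π - a 0) + (π - a 1) + (π - a 2) + (π - a 3)))
        - (‖E 4‖ * Real.cos ((π - a 0) + (π - a 1) + (π - a 2) + (π - a 3)))
        * (‖E 2‖ * Real.sin ((π - a 0) + (π - a 1)))
        = ‖E 2‖ * ‖E 4‖ * Real.sin ((π - a 2) + (π - a 3)) := by
      linear_combination (‖E 2‖ * ‖E 4‖) * hdif24
    rw [heq]
    exact mul_pos (mul_pos hn2 hn4) hsb23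
  have hD34 : (-(‖E 3‖ * Real.cos ((π - a 0) + (π - a 1) + (π - a 2))))
        * (‖E 4‖ * Real.sin ((π - a 0) + (π - a 1) + (π - a 2) + (π - a 3)))
      - (‖E 4‖ * Real.cos ((π - a 0) + (π - a 1) + (π - a 2) + (π - a 3)))
        * (-(‖E 3‖ * Real.sin ((π - a 0) + (π - a 1) + (π - a 2)))) < 0 := by
    have heq : (-(‖E 3‖ * Real.cos ((π - a 0) + (π - a 1) + (π - a 2))))
        * (‖E 4‖ * Real.sin ((π - a 0) + (π - a 1) + (π - a 2) + (π - a 3)))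
        - (‖E 4‖ * Real.cos ((π - a 0) + (π - a 1) + (π - a 2) + (π - a 3)))
        * (-(‖E 3‖ * Real.sin ((π - a 0) + (π - a 1) + (π - a 2))))
        = -(‖E 3‖ * ‖E 4‖ * Real.sin (π - a 3)) := by
      linear_combination (-(‖E 3‖ * ‖E 4‖)) * hdif34
    rw [heq]
    exact neg_lt_zero.mpr (mul_pos (mul_pos hn3 hn4) hsb3)
  -- closure of the polygon
  have htel : (∑ i : ZMod 5, (v (i + 1) - v i)) = 0 := by
    rw [Finset.sum_sub_distrib,
      show (∑ i : ZMod 5, v (i + 1)) = ∑ i : ZMod 5, v i from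
        Equiv.sum_comp (Equiv.addRight (1 : ZMod 5)) v,
      sub_self]
  have hclose : E 0 + E 1 + E 2 + E 3 + E 4 = 0 := by
    have h5 : (∑ i : ZMod 5, (v (i + 1) - v i))
        = (v (0+1) - v 0) + (v (1+1) - v 1) + (v (2+1) - v 2)
          + (v (3+1) - v 3) + (v (4+1) - v 4) :=
      Fin.sum_univ_five _
    rw [htel] at h5
    rw [hE 0, hE 1, hE 2, hE 3, hE 4]
    exact h5.symm
  -- coordinates of the closure
  have hf1f1 : @inner ℝ _ _ (U 0) (U 0) = 1 := by
    rw [real_inner_self_eq_norm_sq, hUnorm 0]; norm_num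
  have hf2f2 : @inner ℝ _ _ f2 f2 = 1 := by
    rw [real_inner_self_eq_norm_sq, hf2norm]; norm_num
  have hf2U0 : @inner ℝ _ _ f2 (U 0) = 0 := (real_inner_comm (U 0) f2).trans hU0f2
  have hip : ∀ (w : EuclideanSpace ℝ (Fin n)) (xc yc : ℝ),
      w = xc • U 0 + yc • f2 → @inner ℝ _ _ w (U 0) = xc := by
    intro w xc yc hw
    rw [hw, inner_add_left, real_inner_smul_left, real_inner_smul_left, hf1f1, hf2U0]
    ring
  have hiq : ∀ (w : EuclideanSpace ℝ (Fin n)) (xc yc : ℝ),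
      w = xc • U 0 + yc • f2 → @inner ℝ _ _ w f2 = yc := by
    intro w xc yc hw
    rw [hw, inner_add_left, real_inner_smul_left, real_inner_smul_left, hU0f2, hf2f2]
    ring
  have hXsum : (‖E 0‖) + (-(‖E 1‖ * Real.cos (π - a 0)))
      + (‖E 2‖ * Real.cos ((π - a 0) + (π - a 1)))
      + (-(‖E 3‖ * Real.cos ((π - a 0) + (π - a 1) + (π - a 2))))
      + (‖E 4‖ * Real.cos ((π - a 0) + (π - a 1) + (π - a 2) + (π - a 3))) = 0 := by
    have h := congrArg (fun w => @inner ℝ _ _ w (U 0)) hclose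
    simp only [inner_add_left, inner_zero_left] at h
    rw [hip _ _ _ hE0c, hip _ _ _ hE1c, hip _ _ _ hE2c, hip _ _ _ hE3c,
      hip _ _ _ hE4c] at h
    exact h
  have hYsum : (0:ℝ) + (-(‖E 1‖ * Real.sin (π - a 0)))
      + (‖E 2‖ * Real.sin ((π - a 0) + (π - a 1)))
      + (-(‖E 3‖ * Real.sin ((π - a 0) + (π - a 1) + (π - a 2))))
      + (‖E 4‖ * Real.sin ((π - a 0) + (π - a 1) + (π - a 2) + (π - a 3))) = 0 := by
    have h := congrArg (fun w => @inner ℝ _ _ w f2) hclose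
    simp only [inner_add_left, inner_zero_left] at h
    rw [hiq _ _ _ hE0c, hiq _ _ _ hE1c, hiq _ _ _ hE2c, hiq _ _ _ hE3c,
      hiq _ _ _ hE4c] at h
    exact h
  -- apply the combinatorial core
  rcases pentagon_core hD01 hD02 hD03 hD04 hD12 hD13 hD14 hD23 hD24 hD34
    hXsum hYsum with hcr | hcr | hcr | hcr | hcr
  · -- edges 0 and 2 cross
    refine segments_not_disjoint (v 0) (v (0+1)) (v 2) (v (2+1)) (U 0) f2
      _ _ _ _ _ _ (by rw [← hE 0]; exact hE0c) (by rw [← hE 2]; exact hE2c)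
      ?_ hcr (hdisj 0 2 (by decide) (by decide) (by decide))
    have h02 : v 2 - v 0 = E 0 + E 1 := by
      rw [hE 0, hE 1, show (0:ZMod 5) + 1 = 1 from by decide,
        show (1:ZMod 5) + 1 = 2 from by decide]
      abel
    rw [h02]
    conv_lhs => rw [hE0c, hE1c]
    module
  · -- edges 1 and 3 cross
    refine segments_not_disjoint (v 1) (v (1+1)) (v 3) (v (3+1)) (U 0) f2
      _ _ _ _ _ _ (by rw [← hE 1]; exact hE1c) (by rw [← hE 3]; exact hE3c)
      ?_ hcr (hdisj 1 3 (by decide) (by decide) (by decide))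
    have h13 : v 3 - v 1 = E 1 + E 2 := by
      rw [hE 1, hE 2, show (1:ZMod 5) + 1 = 2 from by decide,
        show (2:ZMod 5) + 1 = 3 from by decide]
      abel
    rw [h13]
    conv_lhs => rw [hE1c, hE2c]
    module
  · -- edges 2 and 4 cross
    refine segments_not_disjoint (v 2) (v (2+1)) (v 4) (v (4+1)) (U 0) f2
      _ _ _ _ _ _ (by rw [← hE 2]; exact hE2c) (by rw [← hE 4]; exact hE4c)
      ?_ hcr (hdisj 2 4 (by decide) (by decide) (by decide))
    have h24 : v 4 - v 2 = E 2 + E 3 := by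
      rw [hE 2, hE 3, show (2:ZMod 5) + 1 = 3 from by decide,
        show (3:ZMod 5) + 1 = 4 from by decide]
      abel
    rw [h24]
    conv_lhs => rw [hE2c, hE3c]
    module
  · -- edges 3 and 0 cross
    refine segments_not_disjoint (v 3) (v (3+1)) (v 0) (v (0+1)) (U 0) f2
      _ _ _ _ _ _ (by rw [← hE 3]; exact hE3c) (by rw [← hE 0]; exact hE0c)
      ?_ hcr (hdisj 3 0 (by decide) (by decide) (by decide))
    have h30 : v 0 - v 3 = E 3 + E 4 := by
      rw [hE 3, hE 4, show (3:ZMod 5) + 1 = 4 from by decide,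
        show (4:ZMod 5) + 1 = 0 from by decide]
      abel
    rw [h30]
    conv_lhs => rw [hE3c, hE4c]
    module
  · -- edges 4 and 1 cross
    refine segments_not_disjoint (v 4) (v (4+1)) (v 1) (v (1+1)) (U 0) f2
      _ _ _ _ _ _ (by rw [← hE 4]; exact hE4c) (by rw [← hE 1]; exact hE1c)
      ?_ hcr (hdisj 4 1 (by decide) (by decide) (by decide))
    have h41 : v 1 - v 4 = E 4 + E 0 := by
      rw [hE 4, hE 0, show (4:ZMod 5) + 1 = 0 from by decide,
        show (0:ZMod 5) + 1 = 1 from by decide]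
      abel
    rw [h41]
    conv_lhs => rw [hE4c, hE0c]
    module
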